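/- Let V be a real inner product space, let a, b, c ∈ V and γ ∈ ℝ. Set E := 2b − c, E⁺ := 2a − b and v := a + γ(a − E). Then ⟨3a − 4b + c, v⟩ = (‖a‖² + ‖E⁺‖²)/2 − (‖b‖² + ‖E‖²)/2 + (2γ + 1/2)·‖a − E‖² + γ·(‖a − b‖² − ‖b − c‖²). -/

import Mathlib

/-- The γ-weighted BDF2 energy identity (equation (Stab2_2nd) of the paper,
cleared of the time-step factor). -/
theorem bdf2_gamma_energy_identity {V : Type*} [NormedAddCommGroup V]
    [InnerProductSpace ℝ V] (a b c : V) (γ : ℝ)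
    (E : V) (hE : E = (2 : ℝ) • b - c)
    (Eplus : V) (hEplus : Eplus = (2 : ℝ) • a - b)
    (v : V) (hv : v = a + γ • (a - E)) :
    (inner ℝ ((3 : ℝ) • a - (4 : ℝ) • b + c) v : ℝ) =
      (‖a‖ ^ 2 + ‖Eplus‖ ^ 2) / 2 - (‖b‖ ^ 2 + ‖E‖ ^ 2) / 2
        + (2 * γ + 1 / 2) * ‖a - E‖ ^ 2
        + γ * (‖a - b‖ ^ 2 - ‖b - c‖ ^ 2) := by
  subst hE hEplus hv
  simp only [← real_inner_self_eq_norm_sq]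
  simp only [inner_add_add_self, inner_sub_sub_self, inner_add_left,
    inner_add_right, inner_sub_left, inner_sub_right, inner_smul_left,
    inner_smul_right, real_inner_comm a b, real_inner_comm a c,
    real_inner_comm b c, RCLike.conj_to_real]
  ring
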